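/- No execution extending a race variant is causally equivalent to the original execution: if τ is a trace with (p : rec(ℓ,cs)) ∈ τ, ℓ' ∈ race_set_τ(ℓ), τ' = variant_τ(ℓ,ℓ'), and τ'' is any trace extending τ' (τ' ≪ τ''), then for all interleavings S ∈ sched(τ) and S'' ∈ sched(τ''), S ≉ S''. -/

import Mathlib

/-- Actions of a message-passing concurrent language with dynamic
process spawning and selective receives. -/
inductive MAction (Pid Tag Val Cstr : Type) : Type where
  | spawn (p : Pid)
  | send (t : Tag) (v : Val) (p : Pid)
  | receive (t : Tag) (cs : Cstr)

/-- An event `p : a` consists of a pid and an action. -/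
structure MEvent (Pid Tag Val Cstr : Type) : Type where
  pid : Pid
  act : MAction Pid Tag Val Cstr

variable {Pid Tag Val Cstr : Type}

/-- Direct (base) dependency between two events: same pid, spawn
dependency, or send/receive dependency on the same message tag. -/
def EvDep (e e' : MEvent Pid Tag Val Cstr) : Prop :=
  e.pid = e'.pid ∨ e.act = MAction.spawn e'.pid ∨
    ∃ t v cs, e.act = MAction.send t v e'.pid ∧ e'.act = MAction.receive t cs

/-- Two events are independent if neither directly depends on the other. -/
def Indep (e e' : MEvent Pid Tag Val Cstr) : Prop := ¬ EvDep e e' ∧ ¬ EvDep e' e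

/-- Base happened-before relation on positions of a sequence of events. -/
def hbBase (S : List (MEvent Pid Tag Val Cstr)) (i j : ℕ) : Prop :=
  i < j ∧ ∃ ei ej, S[i]? = some ei ∧ S[j]? = some ej ∧ EvDep ei ej

/-- The happened-before relation `⇝_S` on positions: the transitive
closure of the base relation. -/
def hb (S : List (MEvent Pid Tag Val Cstr)) : ℕ → ℕ → Prop :=
  Relation.TransGen (hbBase S)

/-- The happened-before relation on events (rather than positions). -/
def hbE (S : List (MEvent Pid Tag Val Cstr)) (e e' : MEvent Pid Tag Val Cstr) : Prop :=
  ∃ i j, S[i]? = some e ∧ S[j]? = some e' ∧ hb S i j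

/-- A single swap of two consecutive independent events. -/
def Swap (S S' : List (MEvent Pid Tag Val Cstr)) : Prop :=
  ∃ (L₁ L₂ : List (MEvent Pid Tag Val Cstr)) (e e' : MEvent Pid Tag Val Cstr),
    Indep e e' ∧ S = L₁ ++ e :: e' :: L₂ ∧ S' = L₁ ++ e' :: e :: L₂

/-- Causal equivalence `S ≈ S'`: a finite number of swaps of consecutive
independent events (note that `Swap` is symmetric). -/
def CausalEq (S S' : List (MEvent Pid Tag Val Cstr)) : Prop :=
  Relation.ReflTransGen Swap S S'

/-- Well-formedness conditions of an interleaving with initial pid `p1`,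
parameterized by the matching function `mtch` on values and constraints. -/
def IsInterleaving (mtch : Val → Cstr → Bool) (p1 : Pid)
    (S : List (MEvent Pid Tag Val Cstr)) : Prop :=
  -- (1) every event of a non-initial pid is preceded by its spawn
  (∀ j ej, S[(j : ℕ)]? = some ej → ej.pid = p1 ∨
     ∃ i ei, i < j ∧ S[(i : ℕ)]? = some ei ∧ ei.pid ≠ ej.pid ∧
       ei.act = MAction.spawn ej.pid) ∧
  -- (2) every receive is preceded by a matching send
  (∀ j ej t cs, S[(j : ℕ)]? = some ej → ej.act = MAction.receive t cs →
     ∃ i ei v, i < j ∧ S[(i : ℕ)]? = some ei ∧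
       ei.act = MAction.send t v ej.pid ∧ mtch v cs = true) ∧
  -- (3) FIFO with matching between each pair of processes
  (∀ i j ei ej t v cs, S[(i : ℕ)]? = some ei → S[(j : ℕ)]? = some ej →
     ei.act = MAction.send t v ej.pid → ej.act = MAction.receive t cs →
     ∀ i' ei' t' v', i' < i → S[(i' : ℕ)]? = some ei' → ei'.pid = ei.pid →
       ei'.act = MAction.send t' v' ej.pid →
       mtch v' cs = false ∨ ∃ j' ej' cs', j' < j ∧ S[(j' : ℕ)]? = some ej' ∧
         ej'.pid = ej.pid ∧ ej'.act = MAction.receive t' cs') ∧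
  -- (4) uniqueness of pids (spawn arguments) and message tags
  ((∀ i j ei ej q, S[(i : ℕ)]? = some ei → S[(j : ℕ)]? = some ej →
     ei.act = MAction.spawn q → ej.act = MAction.spawn q → i = j) ∧
   (∀ i j ei ej t v q v' q', S[(i : ℕ)]? = some ei → S[(j : ℕ)]? = some ej →
     ei.act = MAction.send t v q → ej.act = MAction.send t v' q' → i = j))

/-- The sequence of actions of process `p` in `S`, in order. -/
def actions [DecidableEq Pid] (p : Pid) (S : List (MEvent Pid Tag Val Cstr)) :
    List (MAction Pid Tag Val Cstr) :=
  (S.filter (fun e => decide (e.pid = p))).map MEvent.act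

/-- The trace of an interleaving: the mapping from each pid to its
sequence of actions. -/
def tr [DecidableEq Pid] (S : List (MEvent Pid Tag Val Cstr)) :
    Pid → List (MAction Pid Tag Val Cstr) :=
  fun p => actions p S

/-- `S` is a linearization of the trace `τ` (with initial pid `p1`). -/
def InSched [DecidableEq Pid] (mtch : Val → Cstr → Bool) (p1 : Pid)
    (τ : Pid → List (MAction Pid Tag Val Cstr))
    (S : List (MEvent Pid Tag Val Cstr)) : Prop :=
  IsInterleaving mtch p1 S ∧ tr S = τ

/-- A trace is a mapping coming from some interleaving. -/
def IsTrace [DecidableEq Pid] (mtch : Val → Cstr → Bool) (p1 : Pid)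
    (τ : Pid → List (MAction Pid Tag Val Cstr)) : Prop :=
  ∃ S, InSched mtch p1 τ S

/-- Subtrace relation: `τ' ≪ τ` iff each `τ' p` is a prefix of `τ p`. -/
def Subtrace (τ' τ : Pid → List (MAction Pid Tag Val Cstr)) : Prop :=
  ∀ p, τ' p <+: τ p

/-- Base happened-before relation on trace events, identified by a pid
and a position in the action sequence of that pid. -/
def hbTBase (τ : Pid → List (MAction Pid Tag Val Cstr)) :
    Pid × ℕ → Pid × ℕ → Prop := fun x y =>
  (x.1 = y.1 ∧ x.2 < y.2) ∨
  ((τ x.1)[x.2]? = some (MAction.spawn y.1)) ∨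
  (∃ t v cs, (τ x.1)[x.2]? = some (MAction.send t v y.1) ∧
     (τ y.1)[y.2]? = some (MAction.receive t cs))

/-- Happened-before relation `⇝_τ` induced by a trace. -/
def hbT (τ : Pid → List (MAction Pid Tag Val Cstr)) :
    Pid × ℕ → Pid × ℕ → Prop :=
  Relation.TransGen (hbTBase τ)

/-- `ℓ'` races with the message `ℓ` received by the `j`-th action of
process `p` (a receive with constraint `cs`), via the `i`-th action of
the sender `p'`. -/
def InRaceSetVia (mtch : Val → Cstr → Bool)
    (τ : Pid → List (MAction Pid Tag Val Cstr)) (p : Pid) (j : ℕ)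
    (t : Tag) (cs : Cstr) (p' : Pid) (i : ℕ) (t' : Tag) : Prop :=
  t' ≠ t ∧ ∃ v', (τ p')[i]? = some (MAction.send t' v' p) ∧
    mtch v' cs = true ∧ ¬ hbT τ (p, j) (p', i) ∧
    ∀ i' t'' v'', i' < i → (τ p')[i']? = some (MAction.send t'' v'' p) →
      mtch v'' cs = false ∨
        ∃ j' cs'', j' < j ∧ (τ p)[j']? = some (MAction.receive t'' cs'')

/-- `t' ∈ race_set_τ(t)` for the receive at position `j` of process `p`. -/
def InRaceSet (mtch : Val → Cstr → Bool)
    (τ : Pid → List (MAction Pid Tag Val Cstr)) (p : Pid) (j : ℕ)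
    (t : Tag) (cs : Cstr) (t' : Tag) : Prop :=
  ∃ p' i, InRaceSetVia mtch τ p j t cs p' i t'

/-- The function `rdep`, removing the actions that causally depend on a
given sequence of actions, given as an inductive relation mirroring its
defining equations. -/
inductive RDep [DecidableEq Pid] :
    List (MAction Pid Tag Val Cstr) →
    (Pid → List (MAction Pid Tag Val Cstr)) →
    (Pid → List (MAction Pid Tag Val Cstr)) → Prop where
  | nil (τ : Pid → List (MAction Pid Tag Val Cstr)) : RDep [] τ τ
  | rcv (t : Tag) (cs : Cstr) (A' : List (MAction Pid Tag Val Cstr)) (τ τ' :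
      Pid → List (MAction Pid Tag Val Cstr)) :
      RDep A' τ τ' → RDep (MAction.receive t cs :: A') τ τ'
  | spwn (p : Pid) (A' : List (MAction Pid Tag Val Cstr)) (τ τ' :
      Pid → List (MAction Pid Tag Val Cstr)) :
      RDep (A' ++ τ p) (Function.update τ p []) τ' →
      RDep (MAction.spawn p :: A') τ τ'
  | send_rec (t : Tag) (v : Val) (p : Pid) (cs : Cstr)
      (A' A'' Astar : List (MAction Pid Tag Val Cstr))
      (τ τ' : Pid → List (MAction Pid Tag Val Cstr)) :
      τ p = A'' ++ MAction.receive t cs :: Astar →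
      RDep (A' ++ Astar) (Function.update τ p A'') τ' →
      RDep (MAction.send t v p :: A') τ τ'
  | send_norec (t : Tag) (v : Val) (p : Pid)
      (A' : List (MAction Pid Tag Val Cstr))
      (τ τ' : Pid → List (MAction Pid Tag Val Cstr)) :
      (∀ cs, MAction.receive t cs ∉ τ p) → RDep A' τ τ' →
      RDep (MAction.send t v p :: A') τ τ'

/-! ### Auxiliary lemmas -/

section Aux

private lemma prefix_get? {α : Type*} {l₁ l₂ : List α} (h : l₁ <+: l₂) {n : ℕ} {a : α}
    (hn : l₁[n]? = some a) : l₂[n]? = some a := by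
  obtain ⟨tl, rfl⟩ := h
  have hlt : n < l₁.length := (List.getElem?_eq_some_iff.mp hn).1
  rw [List.getElem?_append_left hlt]; exact hn

private lemma filter_get?_exists {α : Type*} (P : α → Bool) :
    ∀ (S : List α) (m : ℕ) (e : α), (S.filter P)[m]? = some e →
      ∃ k, S[k]? = some e ∧ P e = true ∧ (S.take k).countP P = m := by
  intro S
  induction S with
  | nil => intro m e h; simp at h
  | cons a S ih =>
    intro m e h
    by_cases hPa : P a
    · rw [List.filter_cons_of_pos hPa] at h
      cases m with
      | zero =>
        refine ⟨0, ?_, ?_, ?_⟩ <;> simp_all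
      | succ m =>
        obtain ⟨k, hk, hPe, hc⟩ := ih m e (by simpa using h)
        exact ⟨k + 1, by simpa using hk, hPe,
          by simp [List.take_succ_cons, List.countP_cons, hPa, hc]⟩
    · rw [List.filter_cons_of_neg hPa] at h
      obtain ⟨k, hk, hPe, hc⟩ := ih m e h
      exact ⟨k + 1, by simpa using hk, hPe,
        by simp [List.take_succ_cons, List.countP_cons, hPa, hc]⟩

private lemma get?_filter_of {α : Type*} (P : α → Bool) :
    ∀ (S : List α) (k : ℕ) (e : α), S[k]? = some e → P e = true →
      (S.filter P)[(S.take k).countP P]? = some e := by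
  intro S
  induction S with
  | nil => intro k e h; simp at h
  | cons a S ih =>
    intro k e h hPe
    cases k with
    | zero =>
      simp only [List.getElem?_cons_zero, Option.some.injEq] at h
      subst h
      simp [List.filter_cons_of_pos hPe]
    | succ k =>
      simp only [List.getElem?_cons_succ] at h
      have hIH := ih k e h hPe
      by_cases hPa : P a
      · rw [List.filter_cons_of_pos hPa]
        simpa [List.take_succ_cons, List.countP_cons, hPa] using hIH
      · rw [List.filter_cons_of_neg hPa]
        simpa [List.take_succ_cons, List.countP_cons, hPa] using hIH

private lemma countP_take_mono {α : Type*} (P : α → Bool) (S : List α) {k k' : ℕ}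
    (h : k ≤ k') : (S.take k).countP P ≤ (S.take k').countP P := by
  have h1 : S.take k = (S.take k').take k := by
    rw [List.take_take, Nat.min_eq_left h]
  rw [h1]
  exact List.Sublist.countP_le (p := P) (List.take_sublist _ _)

private lemma countP_take_strict {α : Type*} (P : α → Bool) (S : List α) {k k' : ℕ} {e : α}
    (hk : S[k]? = some e) (hPe : P e = true) (h : k < k') :
    (S.take k).countP P < (S.take k').countP P := by
  have h1 : (S.take (k + 1)).countP P = (S.take k).countP P + 1 := by
    rw [List.take_succ]
    rw [hk]
    simp [List.countP_append, hPe]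
  have h2 : (S.take (k + 1)).countP P ≤ (S.take k').countP P := countP_take_mono P S h
  omega

variable [DecidableEq Pid]

/-- `a` is the action of the `m`-th event of pid `q`, located at position `k` of `S`. -/
def EvOcc (S : List (MEvent Pid Tag Val Cstr)) (q : Pid) (m k : ℕ)
    (a : MAction Pid Tag Val Cstr) : Prop :=
  ∃ e : MEvent Pid Tag Val Cstr, S[k]? = some e ∧ e.pid = q ∧ e.act = a ∧
    (S.take k).countP (fun x => decide (x.pid = q)) = m

lemma tr_of_evOcc {S : List (MEvent Pid Tag Val Cstr)} {q : Pid} {m k : ℕ}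
    {a : MAction Pid Tag Val Cstr} (h : EvOcc S q m k a) : (tr S q)[m]? = some a := by
  obtain ⟨e, hk, hpid, hact, hcnt⟩ := h
  have h1 := get?_filter_of (fun x : MEvent Pid Tag Val Cstr => decide (x.pid = q)) S k e hk
    (by simp [hpid])
  rw [hcnt] at h1
  show ((S.filter fun x => decide (x.pid = q)).map MEvent.act)[m]? = some a
  rw [List.getElem?_map, h1]
  simp [hact]

lemma evOcc_of_tr {S : List (MEvent Pid Tag Val Cstr)} {q : Pid} {m : ℕ}
    {a : MAction Pid Tag Val Cstr} (h : (tr S q)[m]? = some a) : ∃ k, EvOcc S q m k a := by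
  have h' : ((S.filter fun x => decide (x.pid = q)).map MEvent.act)[m]? = some a := h
  rw [List.getElem?_map] at h'
  obtain ⟨e, he, hea⟩ := Option.map_eq_some_iff.mp h'
  obtain ⟨k, hk, hPe, hc⟩ := filter_get?_exists _ S m e he
  exact ⟨k, e, hk, by simpa using hPe, hea, hc⟩

lemma evOcc_lt {S : List (MEvent Pid Tag Val Cstr)} {q : Pid} {m k m' k' : ℕ}
    {a a' : MAction Pid Tag Val Cstr} (h : EvOcc S q m k a) (h' : EvOcc S q m' k' a')
    (hmm : m < m') : k < k' := by
  obtain ⟨e, hk, hpid, hact, hcnt⟩ := h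
  obtain ⟨e', hk', hpid', hact', hcnt'⟩ := h'
  by_contra hcon
  push_neg at hcon
  rcases Nat.eq_or_lt_of_le hcon with hEq | hlt
  · subst hEq; omega
  · have := countP_take_strict (fun x : MEvent Pid Tag Val Cstr => decide (x.pid = q)) S hk'
      (by simp [hpid']) hlt
    omega

end Aux

section Interleaving

variable [DecidableEq Pid] {mtch : Val → Cstr → Bool} {p1 : Pid}
  {S : List (MEvent Pid Tag Val Cstr)}

lemma spawned_after (hI : IsInterleaving mtch p1 S) {q : Pid} (hq : q ≠ p1)
    {k k₀ : ℕ} {e e₀ : MEvent Pid Tag Val Cstr}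
    (hk : S[k]? = some e) (he : e.pid = q)
    (hk₀ : S[k₀]? = some e₀) (he₀ : e₀.act = MAction.spawn q) : k₀ < k := by
  rcases hI.1 k e hk with h | ⟨i, ei, hik, hi, _, hact⟩
  · exact absurd (he ▸ h) hq
  · have := hI.2.2.2.1 i k₀ ei e₀ q hi hk₀ (he ▸ hact) he₀
    omega

lemma recv_after_send (hI : IsInterleaving mtch p1 S) {kr ks : ℕ}
    {er es : MEvent Pid Tag Val Cstr} {t₀ : Tag} {cs₀ : Cstr} {v₀ : Val} {q₀ : Pid}
    (hkr : S[kr]? = some er) (her : er.act = MAction.receive t₀ cs₀)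
    (hks : S[ks]? = some es) (hes : es.act = MAction.send t₀ v₀ q₀) : ks < kr := by
  obtain ⟨i, ei, v, hik, hi, hact, _⟩ := hI.2.1 kr er t₀ cs₀ hkr her
  have := hI.2.2.2.2 i ks ei es t₀ v er.pid v₀ q₀ hi hks hact hes
  omega

lemma reach_from_p1 (hI : IsInterleaving mtch p1 S)
    {τ : Pid → List (MAction Pid Tag Val Cstr)} (htr : tr S = τ) :
    ∀ (k : ℕ) (e : MEvent Pid Tag Val Cstr), S[k]? = some e → e.pid ≠ p1 →
      ∀ m', ∃ m, hbT τ (p1, m) (e.pid, m') := by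
  intro k
  induction k using Nat.strong_induction_on with
  | _ k ih =>
    intro e hk hne m'
    rcases hI.1 k e hk with h | ⟨i, ei, hik, hi, hpid, hact⟩
    · exact absurd h hne
    · have hidx : (τ ei.pid)[(S.take i).countP fun x => decide (x.pid = ei.pid)]? =
          some (MAction.spawn e.pid) := by
        rw [← htr]; exact tr_of_evOcc ⟨ei, hi, rfl, hact, rfl⟩
      have hbase : hbTBase τ (ei.pid, (S.take i).countP fun x => decide (x.pid = ei.pid))
          (e.pid, m') := Or.inr (Or.inl hidx)
      by_cases hp : ei.pid = p1
      · exact ⟨_, hp ▸ Relation.TransGen.single hbase⟩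
      · obtain ⟨m, hm⟩ := ih i hik ei hi hp _
        exact ⟨m, hm.tail hbase⟩

lemma spawn_p1_reach (hI : IsInterleaving mtch p1 S)
    {τ : Pid → List (MAction Pid Tag Val Cstr)} (htr : tr S = τ)
    {r p' : Pid} {m i : ℕ} {x : Pid × ℕ} {a' : MAction Pid Tag Val Cstr}
    (hrm : (τ r)[m]? = some (MAction.spawn p1))
    (hP'ev : (τ p')[i]? = some a')
    (hhb : hbT τ x (r, m)) : hbT τ x (p', i) := by
  by_cases hp' : p' = p1
  · subst hp'
    exact hhb.tail (Or.inr (Or.inl hrm))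
  · obtain ⟨k', e', hk', hpid', hact', _⟩ := evOcc_of_tr (q := p') (m := i) (a := a')
      (by rw [htr]; exact hP'ev)
    obtain ⟨m₀, hm₀⟩ := reach_from_p1 hI htr k' e' hk' (by rw [hpid']; exact hp') i
    rw [hpid'] at hm₀
    exact Relation.TransGen.trans
      (hhb.tail (Or.inr (Or.inl hrm) : hbTBase τ (r, m) (p1, m₀))) hm₀

end Interleaving

section Main

variable [DecidableEq Pid]

lemma rdep_main {mtch : Val → Cstr → Bool} {p1 : Pid}
    {S : List (MEvent Pid Tag Val Cstr)}
    {τ : Pid → List (MAction Pid Tag Val Cstr)}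
    (hI : IsInterleaving mtch p1 S) (htr : tr S = τ)
    {p p' : Pid} {A : List (MAction Pid Tag Val Cstr)} {t t' : Tag} {cs : Cstr}
    {v' : Val} {i j₀ : ℕ}
    (hτp : ∀ n, n < A.length → (τ p)[n]? = A[n]?)
    (hsend' : (τ p')[i]? = some (MAction.send t' v' p))
    (hnhb : ¬ hbT τ (p, A.length) (p', i))
    (hj₀ : EvOcc S p A.length j₀ (MAction.receive t cs)) :
    ∀ (L : List (MAction Pid Tag Val Cstr))
      (σ τv : Pid → List (MAction Pid Tag Val Cstr)), RDep L σ τv →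
    (∀ a ∈ L, ∃ q m k, EvOcc S q m k a ∧ hbT τ (p, A.length) (q, m) ∧ j₀ < k) →
    (∀ q, q ≠ p → σ q <+: τ q) →
    σ p = A ++ [MAction.receive t' cs] →
    τv p = A ++ [MAction.receive t' cs] := by
  intro L σ τv h
  induction h with
  | nil σ =>
    intro _ _ h3
    exact h3
  | rcv t₀ cs₀ A₀ σ σv hsub IH =>
    intro h1 h2 h3
    exact IH (fun a ha => h1 a (List.mem_cons_of_mem _ ha)) h2 h3
  | send_norec t₀ v₀ q A₀ σ σv hnone hsub IH =>
    intro h1 h2 h3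
    exact IH (fun a ha => h1 a (List.mem_cons_of_mem _ ha)) h2 h3
  | spwn q A₀ σ σv hsub IH =>
    intro hINV hpre hσp
    obtain ⟨r, m, k, hocc, hhb, hkj⟩ := hINV _ (List.mem_cons_self)
    obtain ⟨e, hk, hpid, hact, hcnt⟩ := hocc
    have hτrm : (τ r)[m]? = some (MAction.spawn q) := by
      rw [← htr]; exact tr_of_evOcc ⟨e, hk, hpid, hact, hcnt⟩
    by_cases hq1 : q = p1
    · exact absurd (spawn_p1_reach hI htr (hq1 ▸ hτrm) hsend' hhb) hnhb
    by_cases hqp : q = p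
    · exfalso
      subst hqp
      obtain ⟨e₀, hj₀S, hpid₀, hact₀, hcnt₀⟩ := hj₀
      rcases hI.1 j₀ e₀ hj₀S with h | ⟨i₂, ei₂, hi₂j, hi₂, hpid₂, hact₂⟩
      · exact hq1 (hpid₀ ▸ h)
      · have := hI.2.2.2.1 i₂ k ei₂ e q hi₂ hk (hpid₀ ▸ hact₂) hact
        omega
    · refine IH ?_ ?_ ?_
      · intro a ha
        rcases List.mem_append.mp ha with ha | ha
        · exact hINV a (List.mem_cons_of_mem _ ha)
        · obtain ⟨d, hd⟩ := List.getElem?_of_mem ha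
          have hτqd : (τ q)[d]? = some a := prefix_get? (hpre q hqp) hd
          obtain ⟨k', hk'⟩ := evOcc_of_tr (q := q) (m := d) (a := a) (by rw [htr]; exact hτqd)
          refine ⟨q, d, k', hk', hhb.tail (Or.inr (Or.inl hτrm)), ?_⟩
          obtain ⟨e', hk'S, hpid', hact', _⟩ := hk'
          have := spawned_after hI hq1 hk'S hpid' hk hact
          omega
      · intro q' hq'
        by_cases h : q' = q
        · subst h
          rw [Function.update_self]
          exact List.nil_prefix
        · rw [Function.update_of_ne h]
          exact hpre q' hq'
      · rw [Function.update_of_ne (Ne.symm hqp)]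
        exact hσp
  | send_rec t₀ v₀ q cs₀ A₀ A'' Astar σ σv hσq hsub IH =>
    intro hINV hpre hσp
    obtain ⟨r, m, k, hocc, hhb, hkj⟩ := hINV _ (List.mem_cons_self)
    obtain ⟨e, hk, hpid, hact, hcnt⟩ := hocc
    have hτrm : (τ r)[m]? = some (MAction.send t₀ v₀ q) := by
      rw [← htr]; exact tr_of_evOcc ⟨e, hk, hpid, hact, hcnt⟩
    by_cases hqp : q = p
    · exfalso
      subst hqp
      have heq : A ++ [MAction.receive t' cs] = A'' ++ MAction.receive t₀ cs₀ :: Astar :=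
        hσp.symm.trans hσq
      have hlen : A''.length ≤ A.length := by
        have := congrArg List.length heq
        simp at this
        omega
      rcases Nat.eq_or_lt_of_le hlen with hEq | hlt
      · -- the consumed receive is the racy receive: t₀ = t'
        have h1 : (A ++ [MAction.receive t' cs])[A''.length]? =
            some (MAction.receive t₀ cs₀) := by
          rw [heq, List.getElem?_append_right (le_refl _)]
          simp
        rw [hEq, List.getElem?_concat_length] at h1
        have ht₀ : t₀ = t' ∧ cs₀ = cs := by
          have := Option.some.inj h1
          cases this; exact ⟨rfl, rfl⟩
        obtain ⟨k₂, e₂, hk₂, hpid₂, hact₂, hcnt₂⟩ := evOcc_of_tr (q := p') (m := i)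
          (a := MAction.send t' v' q) (by rw [htr]; exact hsend')
        have hkk : k = k₂ := hI.2.2.2.2 k k₂ e e₂ t₀ v₀ q v' q hk hk₂ hact
          (by rw [hact₂, ht₀.1])
        have heq2 : e = e₂ := by
          rw [hkk] at hk
          exact Option.some.inj (hk.symm.trans hk₂)
        have hrp' : r = p' := by rw [← hpid, heq2, hpid₂]
        have hmi : m = i := by
          rw [← hcnt, ← hcnt₂, hkk, hrp']
        rw [hrp', hmi] at hhb
        exact hnhb hhb
      · -- the consumed receive lies in A : position contradiction
        have hA : A[A''.length]? = some (MAction.receive t₀ cs₀) := by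
          have h1 : (A ++ [MAction.receive t' cs])[A''.length]? =
              some (MAction.receive t₀ cs₀) := by
            rw [heq, List.getElem?_append_right (le_refl _)]
            simp
          rw [List.getElem?_append_left hlt] at h1
          exact h1
        have hτr : (τ q)[A''.length]? = some (MAction.receive t₀ cs₀) := by
          rw [hτp _ hlt]; exact hA
        obtain ⟨kr, hkrOcc⟩ := evOcc_of_tr (q := q) (m := A''.length)
          (a := MAction.receive t₀ cs₀) (by rw [htr]; exact hτr)
        have hkrj : kr < j₀ := evOcc_lt hkrOcc hj₀ hlt
        obtain ⟨er, hkr, hpidr, hactr, _⟩ := hkrOcc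
        have := recv_after_send hI hkr hactr hk hact
        omega
    · -- q ≠ p : continue by IH
      have hσqpre : σ q <+: τ q := hpre q hqp
      have hrcvq : (τ q)[A''.length]? = some (MAction.receive t₀ cs₀) :=
        prefix_get? hσqpre (by rw [hσq, List.getElem?_append_right (le_refl _)]; simp)
      obtain ⟨kr, hkrOcc⟩ := evOcc_of_tr (q := q) (m := A''.length)
        (a := MAction.receive t₀ cs₀) (by rw [htr]; exact hrcvq)
      have hkkr : k < kr := by
        obtain ⟨er, hkr, hpidr, hactr, _⟩ := hkrOcc
        exact recv_after_send hI hkr hactr hk hact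
      have hbr : hbT τ (p, A.length) (q, A''.length) :=
        hhb.tail (Or.inr (Or.inr ⟨t₀, v₀, cs₀, hτrm, hrcvq⟩))
      refine IH ?_ ?_ ?_
      · intro a ha
        rcases List.mem_append.mp ha with ha | ha
        · exact hINV a (List.mem_cons_of_mem _ ha)
        · obtain ⟨d, hd⟩ := List.getElem?_of_mem ha
          have hτq : (τ q)[A''.length + 1 + d]? = some a := by
            refine prefix_get? hσqpre ?_
            rw [hσq, List.getElem?_append_right (by omega)]
            have hidx : A''.length + 1 + d - A''.length = d + 1 := by omega
            rw [hidx]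
            simpa using hd
          obtain ⟨k', hk'⟩ := evOcc_of_tr (q := q) (m := A''.length + 1 + d) (a := a)
            (by rw [htr]; exact hτq)
          refine ⟨q, _, k', hk', hbr.tail (Or.inl ⟨rfl, by omega⟩), ?_⟩
          have : kr < k' := evOcc_lt hkrOcc hk' (by omega)
          omega
      · intro q' hq'
        by_cases h : q' = q
        · subst h
          rw [Function.update_self]
          exact List.IsPrefix.trans ⟨_, hσq.symm⟩ hσqpre
        · rw [Function.update_of_ne h]
          exact hpre q' hq'
      · rw [Function.update_of_ne (Ne.symm hqp)]
        exact hσp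

lemma swap_actions {S S' : List (MEvent Pid Tag Val Cstr)} (h : Swap S S') (q : Pid) :
    actions q S = actions q S' := by
  obtain ⟨L₁, L₂, e, e', hind, rfl, rfl⟩ := h
  have hne : e.pid ≠ e'.pid := fun hp => hind.1 (Or.inl hp)
  unfold actions
  simp only [List.filter_append, List.filter_cons]
  by_cases h1 : e.pid = q <;> by_cases h2 : e'.pid = q <;> simp_all

lemma causalEq_tr {S S' : List (MEvent Pid Tag Val Cstr)} (h : CausalEq S S') :
    tr S = tr S' := by
  induction h with
  | refl => rfl
  | tail _ hswap ih =>
    funext q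
    exact (congrFun ih q).trans (swap_actions hswap q)

end Main

/-- Theorem 3: no execution extending a race variant is
causally equivalent to the original execution. -/
theorem race_variant_not_causalEq [DecidableEq Pid]
    (mtch : Val → Cstr → Bool) (p1 : Pid)
    (τ τ' τ'' : Pid → List (MAction Pid Tag Val Cstr)) (p : Pid)
    (A A' : List (MAction Pid Tag Val Cstr)) (t : Tag) (cs : Cstr) (t' : Tag)
    (hτp : τ p = A ++ MAction.receive t cs :: A')
    (hrace : InRaceSet mtch τ p A.length t cs t')
    (hvariant : RDep A' (Function.update τ p (A ++ [MAction.receive t' cs])) τ')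
    (hext : Subtrace τ' τ'')
    (S S'' : List (MEvent Pid Tag Val Cstr))
    (hS : InSched mtch p1 τ S) (hS'' : InSched mtch p1 τ'' S'') :
    ¬ CausalEq S S'' := by
  obtain ⟨hI, htr⟩ := hS
  obtain ⟨hI'', htr''⟩ := hS''
  obtain ⟨p', i, ht'ne, v', hsend', hmtch, hnhb, -⟩ := hrace
  -- position of the racy receive in `S`
  have hτA : (τ p)[A.length]? = some (MAction.receive t cs) := by
    rw [hτp, List.getElem?_append_right (le_refl _)]
    simp
  obtain ⟨j₀, hj₀⟩ := evOcc_of_tr (q := p) (m := A.length)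
    (a := MAction.receive t cs) (by rw [htr]; exact hτA)
  -- initial invariant for the rdep computation
  have hτpn : ∀ n, n < A.length → (τ p)[n]? = A[n]? := by
    intro n hn
    rw [hτp, List.getElem?_append_left hn]
  have hinv0 : ∀ a ∈ A', ∃ q m k, EvOcc S q m k a ∧
      hbT τ (p, A.length) (q, m) ∧ j₀ < k := by
    intro a ha
    obtain ⟨d, hd⟩ := List.getElem?_of_mem ha
    have hτa : (τ p)[A.length + 1 + d]? = some a := by
      rw [hτp, List.getElem?_append_right (by omega)]
      have hidx : A.length + 1 + d - A.length = d + 1 := by omega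
      rw [hidx]
      simpa using hd
    obtain ⟨k, hk⟩ := evOcc_of_tr (q := p) (m := A.length + 1 + d) (a := a)
      (by rw [htr]; exact hτa)
    refine ⟨p, _, k, hk, Relation.TransGen.single (Or.inl ⟨rfl, by omega⟩), ?_⟩
    exact evOcc_lt hj₀ hk (by omega)
  have hpre0 : ∀ q, q ≠ p →
      (Function.update τ p (A ++ [MAction.receive t' cs])) q <+: τ q := by
    intro q hq
    rw [Function.update_of_ne hq]
  have hmain : τ' p = A ++ [MAction.receive t' cs] :=
    rdep_main hI htr hτpn hsend' hnhb hj₀ A' _ τ' hvariant hinv0 hpre0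
      (by rw [Function.update_self])
  intro hCE
  have htreq := causalEq_tr hCE
  have hττ'' : τ p = τ'' p := by
    rw [← htr, htreq, htr'']
  have h1 : (τ'' p)[A.length]? = some (MAction.receive t' cs) := by
    refine prefix_get? (hext p) ?_
    rw [hmain]
    exact List.getElem?_concat_length
  rw [← hττ'', hτA] at h1
  exact ht'ne (MAction.receive.injEq .. ▸ Option.some.inj h1).1.symm
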